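/- If g ∈ SL_n(K) stabilizes tropically a point x ∈ (ℝ ∪ {-∞})^n with support I ≠ ∅, then g maps the subspace V_I = span{e_i : i ∈ I} of K^n into itself, i.e., g restricts to an endomorphism of V_I. -/
import Mathlib


/-- If `g ∈ SL_n(K)` tropically stabilizes `x ∈ (ℝ ∪ {-∞})^n` with
nonempty support `I`, then `g` maps the subspace `V_I = span{e_i : i ∈ I}` of `K^n`
into itself. -/
theorem tropical_stabilizer_preserves_subspace {K : Type*} [Field K] {n : ℕ}
    (v : K → EReal) (h0 : v 0 = ⊤)
    (hfin : ∀ a : K, a ≠ 0 → ∃ r : ℝ, v a = (r : EReal))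
    (g : Matrix (Fin n) (Fin n) K) (hg : g.det = 1)
    (x : Fin n → EReal) (hxtop : ∀ i, x i ≠ ⊤) (hI : ∃ i, x i ≠ ⊥)
    (hstab : ∀ i, (⨆ j, (-(v (g i j)) + x j)) = x i) :
    (Submodule.span K ((fun i => (Pi.single i 1 : Fin n → K)) '' {i | x i ≠ ⊥})).map
        g.mulVecLin
      ≤ Submodule.span K ((fun i => (Pi.single i 1 : Fin n → K)) '' {i | x i ≠ ⊥}) := by
  rw [Submodule.map_span, Submodule.span_le]
  rintro _ ⟨_, ⟨i, hi, rfl⟩, rfl⟩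
  simp only [Set.mem_setOf_eq] at hi
  -- The image of e_i is the i-th column of g.
  have hcol : g.mulVecLin (Pi.single i 1) = fun k => g k i := by
    ext k
    simp [Matrix.mulVecLin, Matrix.mulVec_single]
  -- entries of the column outside the support vanish
  have hzero : ∀ k, x k = ⊥ → g k i = 0 := by
    intro k hk
    by_contra hne
    obtain ⟨r, hr⟩ := hfin _ hne
    have hsup := hstab k
    rw [hk] at hsup
    have hle : (-(v (g k i)) + x i) ≤ ⊥ := hsup ▸ le_iSup (fun j => -(v (g k j)) + x j) i
    obtain ⟨s, hs⟩ : ∃ s : ℝ, x i = (s : EReal) := by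
      lift x i to ℝ using ⟨hxtop i, hi⟩ with s
      exact ⟨s, rfl⟩
    rw [hr, hs, ← EReal.coe_neg, ← EReal.coe_add, le_bot_iff] at hle
    exact EReal.coe_ne_bot _ hle
  rw [hcol]
  have hsum : (fun k => g k i) = ∑ k : Fin n, g k i • (Pi.single k 1 : Fin n → K) := by
    ext m
    simp [Pi.single_apply, Finset.sum_ite_eq', eq_comm]
  rw [hsum]
  apply Submodule.sum_mem
  intro k _
  by_cases hk : x k = ⊥
  · rw [hzero k hk, zero_smul]
    exact Submodule.zero_mem _
  · exact Submodule.smul_mem _ _ (Submodule.subset_span ⟨k, hk, rfl⟩)
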